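/- Let μ > 0, ω > 0, N an even positive integer, and a ∈ ℝ. Define the N-tuple Ψ̂ᵃ_ω on the star graph by (Ψ̂ᵃ_ω)ᵢ = φ_{ω,−a} for i = 1,…,N/2 and (Ψ̂ᵃ_ω)ᵢ = φ_{ω,a} for i = N/2+1,…,N. Then Ψ̂ᵃ_ω satisfies the Kirchhoff vertex conditions ((Ψ̂ᵃ_ω)₁(0) = … = (Ψ̂ᵃ_ω)_N(0) and Σ_{k=1}^N (Ψ̂ᵃ_ω)_k'(0) = 0) and each component solves −ψ'' − ψ^{2μ+1} + ωψ = 0 on [0,∞). Hence for the free vertex (α = 0) and even N there is a one-parameter family of stationary states indexed by a ∈ ℝ. -/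

import Mathlib

open Set

/-- The soliton profile `φ_{ω,a}(x) = ((μ+1)ω)^{1/(2μ)} sech^{1/μ}(μ√ω (x − a))`. -/
noncomputable def solitonProfile (μ ω a : ℝ) (x : ℝ) : ℝ :=
  ((μ + 1) * ω) ^ (1 / (2 * μ)) *
    (1 / Real.cosh (μ * Real.sqrt ω * (x - a))) ^ (1 / μ)

lemma soliton_eq (μ ω a x : ℝ) :
    solitonProfile μ ω a x =
      ((μ + 1) * ω) ^ (1 / (2 * μ)) *
        Real.cosh (μ * Real.sqrt ω * (x - a)) ^ (-(1 / μ)) := by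
  unfold solitonProfile
  rw [one_div (Real.cosh _), Real.inv_rpow (Real.cosh_pos _).le,
    ← Real.rpow_neg (Real.cosh_pos _).le]

lemma hasDerivAt_soliton (μ ω a : ℝ) (x : ℝ) :
    HasDerivAt (solitonProfile μ ω a)
      (((μ + 1) * ω) ^ (1 / (2 * μ)) *
        ((μ * Real.sqrt ω * Real.sinh (μ * Real.sqrt ω * (x - a))) * (-(1 / μ)) *
          Real.cosh (μ * Real.sqrt ω * (x - a)) ^ (-(1 / μ) - 1))) x := by
  have h1 : HasDerivAt (fun y : ℝ => μ * Real.sqrt ω * (y - a)) (μ * Real.sqrt ω) x := by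
    simpa using ((hasDerivAt_id x).sub_const a).const_mul (μ * Real.sqrt ω)
  have h2 : HasDerivAt (fun y : ℝ => Real.cosh (μ * Real.sqrt ω * (y - a)))
      (Real.sinh (μ * Real.sqrt ω * (x - a)) * (μ * Real.sqrt ω)) x :=
    (Real.hasDerivAt_cosh _).comp x h1
  have h3 := (h2.rpow_const (p := -(1 / μ)) (Or.inl (Real.cosh_pos _).ne'))
  have h4 := h3.const_mul (((μ + 1) * ω) ^ (1 / (2 * μ)))
  have hfe : (fun y : ℝ => ((μ + 1) * ω) ^ (1 / (2 * μ)) *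
      Real.cosh (μ * Real.sqrt ω * (y - a)) ^ (-(1 / μ))) = solitonProfile μ ω a :=
    funext fun y => (soliton_eq μ ω a y).symm
  rw [hfe] at h4
  refine h4.congr_deriv ?_
  ring

lemma deriv_soliton (μ ω a : ℝ) :
    deriv (solitonProfile μ ω a) = fun x =>
      ((μ + 1) * ω) ^ (1 / (2 * μ)) *
        ((μ * Real.sqrt ω * Real.sinh (μ * Real.sqrt ω * (x - a))) * (-(1 / μ)) *
          Real.cosh (μ * Real.sqrt ω * (x - a)) ^ (-(1 / μ) - 1)) :=
  funext fun x => (hasDerivAt_soliton μ ω a x).deriv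

lemma deriv2_soliton (μ ω a x : ℝ) :
    deriv (deriv (solitonProfile μ ω a)) x =
      ((μ + 1) * ω) ^ (1 / (2 * μ)) * (μ * Real.sqrt ω) * (-(1 / μ)) *
        (Real.cosh (μ * Real.sqrt ω * (x - a)) * (μ * Real.sqrt ω) *
            Real.cosh (μ * Real.sqrt ω * (x - a)) ^ (-(1 / μ) - 1) +
          Real.sinh (μ * Real.sqrt ω * (x - a)) *
            (Real.sinh (μ * Real.sqrt ω * (x - a)) * (μ * Real.sqrt ω) * (-(1 / μ) - 1) *
              Real.cosh (μ * Real.sqrt ω * (x - a)) ^ (-(1 / μ) - 1 - 1))) := by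
  rw [deriv_soliton]
  have h1 : HasDerivAt (fun y : ℝ => μ * Real.sqrt ω * (y - a)) (μ * Real.sqrt ω) x := by
    simpa using ((hasDerivAt_id x).sub_const a).const_mul (μ * Real.sqrt ω)
  have hs : HasDerivAt (fun y : ℝ => Real.sinh (μ * Real.sqrt ω * (y - a)))
      (Real.cosh (μ * Real.sqrt ω * (x - a)) * (μ * Real.sqrt ω)) x :=
    (Real.hasDerivAt_sinh _).comp x h1
  have hc : HasDerivAt (fun y : ℝ => Real.cosh (μ * Real.sqrt ω * (y - a)))
      (Real.sinh (μ * Real.sqrt ω * (x - a)) * (μ * Real.sqrt ω)) x :=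
    (Real.hasDerivAt_cosh _).comp x h1
  have hcp := hc.rpow_const (p := -(1 / μ) - 1) (Or.inl (Real.cosh_pos _).ne')
  have hprod := (hs.mul hcp).const_mul
    (((μ + 1) * ω) ^ (1 / (2 * μ)) * (μ * Real.sqrt ω) * (-(1 / μ)))
  have heq : (fun y : ℝ => ((μ + 1) * ω) ^ (1 / (2 * μ)) * (μ * Real.sqrt ω) * (-(1 / μ)) *
      (Real.sinh (μ * Real.sqrt ω * (y - a)) * Real.cosh (μ * Real.sqrt ω * (y - a)) ^ (-(1 / μ) - 1)))
      = (fun y : ℝ => ((μ + 1) * ω) ^ (1 / (2 * μ)) *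
        ((μ * Real.sqrt ω * Real.sinh (μ * Real.sqrt ω * (y - a))) * (-(1 / μ)) *
          Real.cosh (μ * Real.sqrt ω * (y - a)) ^ (-(1 / μ) - 1))) := by
    funext y; ring
  simp only [Pi.mul_apply] at hprod
  rw [heq] at hprod
  rw [hprod.deriv]

lemma soliton_ode (μ ω a : ℝ) (hμ : 0 < μ) (hω : 0 < ω) (x : ℝ) :
    -(deriv (deriv (solitonProfile μ ω a)) x) -
      solitonProfile μ ω a x ^ (2 * μ + 1) + ω * solitonProfile μ ω a x = 0 := by
  have hA : (0:ℝ) < (μ + 1) * ω := by positivity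
  set b : ℝ := μ * Real.sqrt ω with hbdef
  set C : ℝ := ((μ + 1) * ω) ^ (1 / (2 * μ)) with hCdef
  set c : ℝ := Real.cosh (b * (x - a)) with hcdef
  set s : ℝ := Real.sinh (b * (x - a)) with hsdef
  have hc : (0:ℝ) < c := Real.cosh_pos _
  have hsq : s ^ 2 = c ^ 2 - 1 := by
    have := Real.cosh_sq (b * (x - a)); rw [← hcdef, ← hsdef] at this; linarith
  have hb2 : b ^ 2 = μ ^ 2 * ω := by
    rw [hbdef, mul_pow, Real.sq_sqrt hω.le]
  -- power identity for the nonlinearity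
  have hCnl : (C * c ^ (-(1 / μ))) ^ (2 * μ + 1) = C * ((μ + 1) * ω) * c ^ (-(1 / μ) - 2) := by
    rw [Real.mul_rpow (Real.rpow_nonneg hA.le _) (Real.rpow_nonneg hc.le _)]
    rw [← Real.rpow_mul hA.le, ← Real.rpow_mul hc.le]
    have e1 : 1 / (2 * μ) * (2 * μ + 1) = 1 / (2 * μ) + 1 := by field_simp; ring
    have e2 : -(1 / μ) * (2 * μ + 1) = -(1 / μ) - 2 := by field_simp; ring
    rw [e1, e2, Real.rpow_add hA, Real.rpow_one, ← hCdef]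
  -- rewrite the derivatives
  rw [deriv2_soliton, soliton_eq, ← hbdef, ← hCdef, ← hcdef, ← hsdef, hCnl]
  have e3 : c ^ (-(1 / μ)) = c ^ (-(1 / μ) - 2) * c * c := by
    rw [show -(1 / μ) = -(1 / μ) - 2 + 1 + 1 by ring, Real.rpow_add hc, Real.rpow_add hc,
      Real.rpow_one]
    ring
  have e4 : c ^ (-(1 / μ) - 1) = c ^ (-(1 / μ) - 2) * c := by
    rw [show -(1 / μ) - 1 = -(1 / μ) - 2 + 1 by ring, Real.rpow_add hc, Real.rpow_one]
  have e5 : c ^ (-(1 / μ) - 1 - 1) = c ^ (-(1 / μ) - 2) := by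
    rw [show -(1 / μ) - 1 - 1 = -(1 / μ) - 2 by ring]
  rw [e3, e4, e5]
  set t : ℝ := c ^ (-(1 / μ) - 2) with htdef
  have hμ' : μ ≠ 0 := hμ.ne'
  field_simp
  linear_combination (C * t * (c ^ 2 * μ + s ^ 2 * (-1 - μ))) * hb2 +
    (C * t * μ ^ 2 * ω * (-1 - μ)) * hsq

lemma soliton_val_eq (μ ω a : ℝ) :
    solitonProfile μ ω (-a) 0 = solitonProfile μ ω a 0 := by
  unfold solitonProfile
  rw [show (0:ℝ) - -a = a by ring, show (0:ℝ) - a = -a by ring, mul_neg, Real.cosh_neg]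

lemma soliton_deriv_add (μ ω a : ℝ) :
    deriv (solitonProfile μ ω (-a)) 0 + deriv (solitonProfile μ ω a) 0 = 0 := by
  rw [(hasDerivAt_soliton μ ω (-a) 0).deriv, (hasDerivAt_soliton μ ω a 0).deriv]
  rw [show (0:ℝ) - -a = a by ring, show (0:ℝ) - a = -a by ring,
    show μ * Real.sqrt ω * (-a) = -(μ * Real.sqrt ω * a) by ring, Real.sinh_neg, Real.cosh_neg]
  ring

theorem stmt_16 (μ ω a : ℝ) (hμ : 0 < μ) (hω : 0 < ω)
    (N : ℕ) (hN : 0 < N) (hNeven : Even N)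
    (Ψ : Fin N → ℝ → ℝ)
    (hΨ : ∀ i : Fin N, Ψ i =
      if (i : ℕ) < N / 2 then solitonProfile μ ω (-a) else solitonProfile μ ω a) :
    -- Kirchhoff vertex conditions: continuity at the vertex …
    (∀ i j : Fin N, Ψ i 0 = Ψ j 0) ∧
    -- … and vanishing total flux
    (∑ i : Fin N, deriv (Ψ i) 0 = 0) ∧
    -- each component solves the stationary NLS on the half-line, so for the
    -- free vertex (α = 0) and even `N` there is a one-parameter family of
    -- stationary states indexed by `a ∈ ℝ`
    (∀ i : Fin N, ∀ x : ℝ, 0 ≤ x →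
      -(deriv (deriv (Ψ i)) x) - Ψ i x ^ (2 * μ + 1) + ω * Ψ i x = 0) := by
  refine ⟨?_, ?_, ?_⟩
  · intro i j
    rw [hΨ i, hΨ j]
    split_ifs <;> simp [soliton_val_eq]
  · have hval : ∀ i : Fin N, deriv (Ψ i) 0 =
        if (i : ℕ) < N / 2 then deriv (solitonProfile μ ω (-a)) 0
        else deriv (solitonProfile μ ω a) 0 := by
      intro i; rw [hΨ i]; split_ifs <;> rfl
    calc ∑ i : Fin N, deriv (Ψ i) 0
        = ∑ i ∈ Finset.range N, (if i < N / 2 then deriv (solitonProfile μ ω (-a)) 0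
            else deriv (solitonProfile μ ω a) 0) := by
          rw [← Fin.sum_univ_eq_sum_range]
          exact Finset.sum_congr rfl fun i _ => hval i
      _ = 0 := by
          rw [Finset.sum_ite]
          rw [show (Finset.range N).filter (fun i => i < N / 2) = Finset.range (N / 2) by
            ext i; simp; omega]
          rw [show (Finset.range N).filter (fun i => ¬ i < N / 2) = Finset.Ico (N / 2) N by
            ext i; simp; omega]
          rw [Finset.sum_const, Finset.sum_const, Finset.card_range, Nat.card_Ico]
          obtain ⟨k, hk⟩ := hNeven
          have h1 : N / 2 = k := by omega
          rw [h1, show N - k = k by omega, ← smul_add, soliton_deriv_add, smul_zero]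
  · intro i x _
    rw [hΨ i]
    split_ifs
    · exact soliton_ode μ ω (-a) hμ hω x
    · exact soliton_ode μ ω a hμ hω x
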